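/- Let A and B be C*-algebras with A unital, and let φ : cl(GL(M₂(A))) → B be an arbitrary function defined on the norm closure of the set of invertible elements of M₂(A). Then φ extends to a ℂ-algebra homomorphism M₂(A) → B if and only if φ is a semigroup homomorphism (φ(xy) = φ(x)φ(y) whenever x, y and xy lie in cl(GL(M₂(A)))) which is continuous on ℝ·1 (i.e. λ ↦ φ(λ·1) is continuous on ℝ) and satisfies φ(i·1) = i·φ(e₁₁) + i·φ(e₂₂). -/

import Mathlib

attribute [local instance] Matrix.linftyOpNormedRing

namespace Stmt7Aux
open Matrix Filter

local notation "E" => Matrix.single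

section RingAux
variable {A : Type*} [Ring A]

lemma e_one : (1 : Matrix (Fin 2) (Fin 2) A) = E 0 0 1 + E 1 1 1 := by
  ext i j
  fin_cases i <;> fin_cases j <;>
    simp [Matrix.single, Matrix.one_apply]

lemma e_corner (x : Matrix (Fin 2) (Fin 2) A) (i j : Fin 2) :
    E i i (1:A) * x * E j j 1 = E i j (x i j) := by
  ext a b
  simp only [Matrix.mul_apply, Fin.sum_univ_two, Matrix.single, Matrix.of_apply]
  fin_cases i <;> fin_cases j <;> fin_cases a <;> fin_cases b <;> simp

lemma isUnit_tri01 (a : A) : IsUnit ((1 : Matrix (Fin 2) (Fin 2) A) + E 0 1 a) := by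
  refine ⟨⟨1 + E 0 1 a, 1 - E 0 1 a, ?_, ?_⟩, rfl⟩ <;>
  · simp [mul_add, add_mul, mul_sub, sub_mul]

lemma isUnit_tri10 (a : A) : IsUnit ((1 : Matrix (Fin 2) (Fin 2) A) + E 1 0 a) := by
  refine ⟨⟨1 + E 1 0 a, 1 - E 1 0 a, ?_, ?_⟩, rfl⟩ <;>
  · simp [mul_add, add_mul, mul_sub, sub_mul]

lemma isUnit_u00 (a : A) :
    IsUnit ((E 0 0 a + E 0 1 1 + E 1 0 1 : Matrix (Fin 2) (Fin 2) A)) := by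
  refine ⟨⟨_, E 0 1 1 + E 1 0 1 - E 1 1 a, ?_, ?_⟩, rfl⟩ <;>
  · simp [mul_add, add_mul, mul_sub, sub_mul]
    rw [e_one]
    abel

lemma isUnit_u11 (a : A) :
    IsUnit ((E 1 1 a + E 0 1 1 + E 1 0 1 : Matrix (Fin 2) (Fin 2) A)) := by
  refine ⟨⟨_, E 0 1 1 + E 1 0 1 - E 0 0 a, ?_, ?_⟩, rfl⟩ <;>
  · simp [mul_add, add_mul, mul_sub, sub_mul]
    rw [e_one]
    abel

lemma prod00 (a : A) :
    E 0 0 (1:A) * ((E 0 0 a + E 0 1 1 + E 1 0 1 : Matrix (Fin 2) (Fin 2) A)) * E 0 0 1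
      = E 0 0 a := by
  rw [e_corner]; simp [Matrix.single]

lemma prod11 (a : A) :
    E 1 1 (1:A) * ((E 1 1 a + E 0 1 1 + E 1 0 1 : Matrix (Fin 2) (Fin 2) A)) * E 1 1 1
      = E 1 1 a := by
  rw [e_corner]; simp [Matrix.single]

lemma prod01 (a : A) :
    E 0 0 (1:A) * ((1 : Matrix (Fin 2) (Fin 2) A) + E 0 1 a) * E 1 1 1 = E 0 1 a := by
  rw [e_corner]; simp [Matrix.single, Matrix.one_apply]

lemma prod10 (a : A) :
    E 1 1 (1:A) * ((1 : Matrix (Fin 2) (Fin 2) A) + E 1 0 a) * E 0 0 1 = E 1 0 a := by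
  rw [e_corner]; simp [Matrix.single, Matrix.one_apply]

end RingAux

section Mem
variable {A : Type*} [CStarAlgebra A]

lemma isUnit_diagC00 (c : ℂ) (hc : c ≠ 0) :
    IsUnit ((E 0 0 (1:A) + E 1 1 (c • 1) : Matrix (Fin 2) (Fin 2) A)) := by
  have h1 : (c • (1:A)) * (c⁻¹ • 1) = 1 := by
    rw [smul_mul_assoc, one_mul, smul_smul, mul_inv_cancel₀ hc, one_smul]
  have h2 : (c⁻¹ • (1:A)) * (c • 1) = 1 := by
    rw [smul_mul_assoc, one_mul, smul_smul, inv_mul_cancel₀ hc, one_smul]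
  refine ⟨⟨_, E 0 0 1 + E 1 1 (c⁻¹ • 1), ?_, ?_⟩, rfl⟩ <;>
    · simp [mul_add, add_mul, h1, h2]
      exact (e_one).symm

lemma isUnit_diagC11 (c : ℂ) (hc : c ≠ 0) :
    IsUnit ((E 1 1 (1:A) + E 0 0 (c • 1) : Matrix (Fin 2) (Fin 2) A)) := by
  have h1 : (c • (1:A)) * (c⁻¹ • 1) = 1 := by
    rw [smul_mul_assoc, one_mul, smul_smul, mul_inv_cancel₀ hc, one_smul]
  have h2 : (c⁻¹ • (1:A)) * (c • 1) = 1 := by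
    rw [smul_mul_assoc, one_mul, smul_smul, inv_mul_cancel₀ hc, one_smul]
  refine ⟨⟨_, E 1 1 1 + E 0 0 (c⁻¹ • 1), ?_, ?_⟩, rfl⟩ <;>
    · simp [mul_add, add_mul, h1, h2]
      rw [e_one]; abel

lemma continuous_single (i j : Fin 2) :
    Continuous fun a : A => (E i j a : Matrix (Fin 2) (Fin 2) A) := by
  apply continuous_matrix
  intro a' b'
  by_cases h : i = a' ∧ j = b'
  · simpa [Matrix.single, h] using continuous_id'
  · simpa [Matrix.single, h] using continuous_const

lemma e00_one_mem :
    (E 0 0 (1:A)) ∈ closure {z : Matrix (Fin 2) (Fin 2) A | IsUnit z} := by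
  have hseq : Tendsto (fun n : ℕ => (1/((n:ℝ)+1) : ℝ)) atTop (nhds 0) :=
    tendsto_one_div_add_atTop_nhds_zero_nat
  have hseqC : Tendsto (fun n : ℕ => ((1/((n:ℝ)+1) : ℝ) : ℂ)) atTop (nhds ((0:ℝ):ℂ)) :=
    (Complex.continuous_ofReal.tendsto 0).comp hseq
  have hcontg : Continuous
      (fun c : ℂ => (E 0 0 (1:A) + E 1 1 (c • 1) : Matrix (Fin 2) (Fin 2) A)) :=
    continuous_const.add
      ((continuous_single 1 1).comp (continuous_id.smul continuous_const))
  refine mem_closure_of_tendsto (b := atTop)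
    (f := fun n : ℕ => (E 0 0 (1:A) + E 1 1 ((((1/((n:ℝ)+1) : ℝ)):ℂ) • 1)
      : Matrix (Fin 2) (Fin 2) A)) ?_ (Filter.Eventually.of_forall fun n => ?_)
  · have htend := (hcontg.tendsto _).comp hseqC
    simpa [Function.comp_def] using htend
  · exact isUnit_diagC00 _ (by
      simp only [ne_eq, Complex.ofReal_eq_zero]
      positivity)

lemma e11_one_mem :
    (E 1 1 (1:A)) ∈ closure {z : Matrix (Fin 2) (Fin 2) A | IsUnit z} := by
  have hseq : Tendsto (fun n : ℕ => (1/((n:ℝ)+1) : ℝ)) atTop (nhds 0) :=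
    tendsto_one_div_add_atTop_nhds_zero_nat
  have hseqC : Tendsto (fun n : ℕ => ((1/((n:ℝ)+1) : ℝ) : ℂ)) atTop (nhds ((0:ℝ):ℂ)) :=
    (Complex.continuous_ofReal.tendsto 0).comp hseq
  have hcontg : Continuous
      (fun c : ℂ => (E 1 1 (1:A) + E 0 0 (c • 1) : Matrix (Fin 2) (Fin 2) A)) :=
    continuous_const.add
      ((continuous_single 0 0).comp (continuous_id.smul continuous_const))
  refine mem_closure_of_tendsto (b := atTop)
    (f := fun n : ℕ => (E 1 1 (1:A) + E 0 0 ((((1/((n:ℝ)+1) : ℝ)):ℂ) • 1)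
      : Matrix (Fin 2) (Fin 2) A)) ?_ (Filter.Eventually.of_forall fun n => ?_)
  · have htend := (hcontg.tendsto _).comp hseqC
    simpa [Function.comp_def] using htend
  · exact isUnit_diagC11 _ (by
      simp only [ne_eq, Complex.ofReal_eq_zero]
      positivity)

lemma cmul {x y : Matrix (Fin 2) (Fin 2) A}
    (hx : x ∈ closure {z : Matrix (Fin 2) (Fin 2) A | IsUnit z})
    (hy : y ∈ closure {z : Matrix (Fin 2) (Fin 2) A | IsUnit z}) :
    x * y ∈ closure {z : Matrix (Fin 2) (Fin 2) A | IsUnit z} := by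
  let U : Submonoid (Matrix (Fin 2) (Fin 2) A) :=
    { carrier := {z | IsUnit z}
      mul_mem' := fun ha hb => ha.mul hb
      one_mem' := isUnit_one }
  exact U.topologicalClosure.mul_mem hx hy

lemma e00a_mem (a : A) :
    (E 0 0 a) ∈ closure {z : Matrix (Fin 2) (Fin 2) A | IsUnit z} := by
  rw [← prod00 a]
  exact cmul (cmul e00_one_mem (subset_closure (isUnit_u00 a))) e00_one_mem

lemma e01a_mem (a : A) :
    (E 0 1 a) ∈ closure {z : Matrix (Fin 2) (Fin 2) A | IsUnit z} := by
  rw [← prod01 a]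
  exact cmul (cmul e00_one_mem (subset_closure (isUnit_tri01 a))) e11_one_mem

lemma e10a_mem (a : A) :
    (E 1 0 a) ∈ closure {z : Matrix (Fin 2) (Fin 2) A | IsUnit z} := by
  rw [← prod10 a]
  exact cmul (cmul e11_one_mem (subset_closure (isUnit_tri10 a))) e00_one_mem

lemma e11a_mem (a : A) :
    (E 1 1 a) ∈ closure {z : Matrix (Fin 2) (Fin 2) A | IsUnit z} := by
  rw [← prod11 a]
  exact cmul (cmul e11_one_mem (subset_closure (isUnit_u11 a))) e11_one_mem

lemma e_mem (i j : Fin 2) (a : A) :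
    (E i j a) ∈ closure {z : Matrix (Fin 2) (Fin 2) A | IsUnit z} := by
  fin_cases i <;> fin_cases j
  · exact e00a_mem a
  · exact e01a_mem a
  · exact e10a_mem a
  · exact e11a_mem a

lemma smulC_one_mem (c : ℂ) :
    c • (1 : Matrix (Fin 2) (Fin 2) A) ∈ closure {z : Matrix (Fin 2) (Fin 2) A | IsUnit z} := by
  rcases eq_or_ne c 0 with rfl | hc
  · rw [zero_smul]
    simpa using e00a_mem (0 : A)
  · exact subset_closure ⟨⟨c • 1, c⁻¹ • 1,
      by rw [smul_mul_assoc, one_mul, smul_smul, mul_inv_cancel₀ hc, one_smul],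
      by rw [smul_mul_assoc, one_mul, smul_smul, inv_mul_cancel₀ hc, one_smul]⟩, rfl⟩

end Mem
end Stmt7Aux

open Stmt7Aux

/-- Let `A` and `B` be C*-algebras with `A` unital, and let
`φ` be an arbitrary function on the norm closure of the invertibles of
`M₂(A)` (modelled as a total function whose relevant values are those on the
closure).  Then `φ` extends to a `ℂ`-algebra homomorphism `M₂(A) → B` if and
only if `φ` is a semigroup homomorphism on the closure which is continuous
on `ℝ·1` and satisfies `φ(i·1) = i·φ(e₁₁) + i·φ(e₂₂)`. -/
theorem stmt_7 {A B : Type*} [CStarAlgebra A] [NonUnitalCStarAlgebra B]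
    (φ : Matrix (Fin 2) (Fin 2) A → B) :
    (∃ ψ : Matrix (Fin 2) (Fin 2) A → B,
        (∀ x y, ψ (x + y) = ψ x + ψ y) ∧ (∀ (c : ℂ) (x), ψ (c • x) = c • ψ x) ∧
        (∀ x y, ψ (x * y) = ψ x * ψ y) ∧
        (∀ x ∈ closure {z : Matrix (Fin 2) (Fin 2) A | IsUnit z}, ψ x = φ x)) ↔
      ((∀ x y : Matrix (Fin 2) (Fin 2) A,
          x ∈ closure {z : Matrix (Fin 2) (Fin 2) A | IsUnit z} →
          y ∈ closure {z : Matrix (Fin 2) (Fin 2) A | IsUnit z} →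
          x * y ∈ closure {z : Matrix (Fin 2) (Fin 2) A | IsUnit z} →
          φ (x * y) = φ x * φ y) ∧
        Continuous (fun lam : ℝ =>
          φ ((lam : ℂ) • (1 : Matrix (Fin 2) (Fin 2) A))) ∧
        φ (Complex.I • (1 : Matrix (Fin 2) (Fin 2) A)) =
          Complex.I • φ (Matrix.single 0 0 (1 : A)) +
          Complex.I • φ (Matrix.single 1 1 (1 : A))) := by

  constructor
  · rintro ⟨ψ, hadd, hsmul, hmul, hagree⟩
    refine ⟨fun x y hx hy hxy => ?_, ?_, ?_⟩
    · rw [← hagree _ hx, ← hagree _ hy, ← hagree _ hxy, hmul]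
    · have hfun : (fun lam : ℝ => φ ((lam : ℂ) • (1 : Matrix (Fin 2) (Fin 2) A)))
          = fun lam : ℝ => (lam : ℂ) • ψ 1 := by
        funext lam
        rw [← hagree _ (smulC_one_mem _), hsmul]
      rw [hfun]
      exact Complex.continuous_ofReal.smul continuous_const
    · have h1 : φ (Complex.I • (1 : Matrix (Fin 2) (Fin 2) A)) = Complex.I • ψ 1 := by
        rw [← hagree _ (smulC_one_mem _), hsmul]
      have h2 : ψ 1 = φ (Matrix.single 0 0 (1:A)) + φ (Matrix.single 1 1 (1:A)) := by
        calc ψ 1 = ψ (Matrix.single 0 0 (1:A) + Matrix.single 1 1 (1:A)) := by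
              rw [← e_one]
          _ = ψ (Matrix.single 0 0 (1:A)) + ψ (Matrix.single 1 1 (1:A)) :=
              hadd _ _
          _ = _ := by rw [hagree _ (e00a_mem (1:A)), hagree _ (e11a_mem (1:A))]
      rw [h1, h2, smul_add]
  · rintro ⟨hmul, hcont, hI⟩
    have one_mem : (1 : Matrix (Fin 2) (Fin 2) A) ∈
        closure {z : Matrix (Fin 2) (Fin 2) A | IsUnit z} := subset_closure isUnit_one
    have hzero_mem : (0 : Matrix (Fin 2) (Fin 2) A) ∈
        closure {z : Matrix (Fin 2) (Fin 2) A | IsUnit z} := by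
      simpa using e00a_mem (0 : A)
    have hm : ∀ x ∈ closure {z : Matrix (Fin 2) (Fin 2) A | IsUnit z},
        ∀ y ∈ closure {z : Matrix (Fin 2) (Fin 2) A | IsUnit z}, φ (x * y) = φ x * φ y :=
      fun x hx y hy => hmul x y hx hy (cmul hx hy)
    -- φ 0 = 0
    have hq0z : φ (Matrix.single 0 0 (1:A)) * φ 0 = φ 0 := by
      have h := hm _ (e00a_mem (1:A)) _ hzero_mem
      rw [mul_zero] at h
      exact h.symm
    have hq1z : φ (Matrix.single 1 1 (1:A)) * φ 0 = φ 0 := by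
      have h := hm _ (e11a_mem (1:A)) _ hzero_mem
      rw [mul_zero] at h
      exact h.symm
    have h2I : φ (0 : Matrix (Fin 2) (Fin 2) A) = (2 * Complex.I) • φ 0 := by
      have h := hm _ (smulC_one_mem Complex.I) _ hzero_mem
      rw [mul_zero] at h
      rw [hI, add_mul, smul_mul_assoc, smul_mul_assoc, hq0z, hq1z, ← add_smul] at h
      rw [h]
      congr 1
      ring
    have hz : φ (0 : Matrix (Fin 2) (Fin 2) A) = 0 := by
      have hneg4 : φ (0 : Matrix (Fin 2) (Fin 2) A) = (-4 : ℂ) • φ 0 := by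
        calc φ (0 : Matrix (Fin 2) (Fin 2) A) = (2*Complex.I) • φ 0 := h2I
          _ = (2*Complex.I) • ((2*Complex.I) • φ 0) :=
              congrArg (fun t => (2*Complex.I) • t) h2I
          _ = ((2*Complex.I) * (2*Complex.I)) • φ 0 := smul_smul _ _ _
          _ = (-4 : ℂ) • φ 0 := by
              rw [mul_mul_mul_comm, Complex.I_mul_I]
              norm_num
      have hsub : (1:ℂ) • φ (0 : Matrix (Fin 2) (Fin 2) A) - (-4:ℂ) • φ 0 = 0 := by
        rw [one_smul, ← hneg4, sub_self]
      rw [← sub_smul] at hsub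
      norm_num at hsub
      exact hsub
    -- products of basis images
    have hmulE : ∀ (i j l : Fin 2) (a b : A),
        φ (Matrix.single i j a) * φ (Matrix.single j l b)
          = φ (Matrix.single i l (a*b)) := by
      intro i j l a b
      rw [← hm _ (e_mem i j a) _ (e_mem j l b)]
      congr 1
      simp
    have hmulE0 : ∀ (i l : Fin 2) (a b : A),
        φ (Matrix.single i 0 a) * φ (Matrix.single 1 l b) = 0 := by
      intro i l a b
      rw [← hm _ (e_mem i 0 a) _ (e_mem 1 l b)]
      have h : (Matrix.single i 0 a : Matrix (Fin 2) (Fin 2) A)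
          * Matrix.single 1 l b = 0 := by simp
      rw [h, hz]
    have hmulE1 : ∀ (i l : Fin 2) (a b : A),
        φ (Matrix.single i 1 a) * φ (Matrix.single 0 l b) = 0 := by
      intro i l a b
      rw [← hm _ (e_mem i 1 a) _ (e_mem 0 l b)]
      have h : (Matrix.single i 1 a : Matrix (Fin 2) (Fin 2) A)
          * Matrix.single 0 l b = 0 := by simp
      rw [h, hz]
    have hq00 : φ (Matrix.single 0 0 (1:A)) * φ (Matrix.single 0 0 (1:A))
        = φ (Matrix.single 0 0 (1:A)) := by
      rw [hmulE, one_mul]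
    have hq11 : φ (Matrix.single 1 1 (1:A)) * φ (Matrix.single 1 1 (1:A))
        = φ (Matrix.single 1 1 (1:A)) := by
      rw [hmulE, one_mul]
    have hq01 : φ (Matrix.single 0 0 (1:A)) * φ (Matrix.single 1 1 (1:A)) = 0 :=
      hmulE0 0 1 1 1
    have hq10 : φ (Matrix.single 1 1 (1:A)) * φ (Matrix.single 0 0 (1:A)) = 0 :=
      hmulE1 1 0 1 1
    -- φ 1 = q0 + q1
    have hkey : ∀ x y : B, (Complex.I • x) * (Complex.I • y) = -(x * y) := by
      intro x y
      rw [smul_mul_assoc, mul_smul_comm, smul_smul, Complex.I_mul_I, neg_one_smul]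
    have hnegone : φ ((-1 : ℂ) • (1 : Matrix (Fin 2) (Fin 2) A))
        = -(φ (Matrix.single 0 0 (1:A)) + φ (Matrix.single 1 1 (1:A))) := by
      have hImul : (Complex.I • (1 : Matrix (Fin 2) (Fin 2) A)) * (Complex.I • 1)
          = ((-1:ℂ)) • 1 := by
        rw [smul_mul_assoc, one_mul, smul_smul, Complex.I_mul_I]
      rw [← hImul, hm _ (smulC_one_mem _) _ (smulC_one_mem _), hI]
      rw [add_mul, mul_add, mul_add, hkey, hkey, hkey, hkey, hq00, hq01, hq10, hq11]
      simp only [neg_zero, add_zero, zero_add]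
      abel
    have hp : φ (1 : Matrix (Fin 2) (Fin 2) A)
        = φ (Matrix.single 0 0 (1:A)) + φ (Matrix.single 1 1 (1:A)) := by
      have hnegmul : ((-1:ℂ) • (1 : Matrix (Fin 2) (Fin 2) A)) * ((-1:ℂ) • 1) = 1 := by
        rw [smul_mul_assoc, one_mul, smul_smul]
        norm_num
      conv_lhs => rw [← hnegmul]
      rw [hm _ (smulC_one_mem _) _ (smulC_one_mem _), hnegone, neg_mul_neg]
      rw [add_mul, mul_add, mul_add, hq00, hq01, hq10, hq11]
      abel
    -- unit absorption
    have hpl : ∀ x ∈ closure {z : Matrix (Fin 2) (Fin 2) A | IsUnit z}, φ x = φ 1 * φ x := by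
      intro x hx
      have h := hm _ one_mem _ hx
      rwa [one_mul] at h
    have hpr : ∀ x ∈ closure {z : Matrix (Fin 2) (Fin 2) A | IsUnit z}, φ x = φ x * φ 1 := by
      intro x hx
      have h := hm _ hx _ one_mem
      rwa [mul_one] at h
    have h11 : φ (1 : Matrix (Fin 2) (Fin 2) A) * φ 1 = φ 1 := by
      have h := hm _ one_mem _ one_mem
      rw [one_mul] at h
      exact h.symm
    -- corner decomposition
    have hcorner : ∀ x ∈ closure {z : Matrix (Fin 2) (Fin 2) A | IsUnit z}, ∀ i j : Fin 2,
        φ (Matrix.single i i (1:A)) * φ x * φ (Matrix.single j j (1:A))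
          = φ (Matrix.single i j (x i j)) := by
      intro x hx i j
      rw [← hm _ (e_mem i i 1) _ hx, ← hm _ (cmul (e_mem i i 1) hx) _ (e_mem j j 1),
        e_corner]
    have hdec : ∀ x ∈ closure {z : Matrix (Fin 2) (Fin 2) A | IsUnit z},
        φ x = φ (Matrix.single 0 0 (x 0 0)) + φ (Matrix.single 0 1 (x 0 1))
          + φ (Matrix.single 1 0 (x 1 0)) + φ (Matrix.single 1 1 (x 1 1)) := by
      intro x hx
      have h1 : φ x = (φ (Matrix.single 0 0 (1:A)) + φ (Matrix.single 1 1 (1:A)))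
          * φ x * (φ (Matrix.single 0 0 (1:A)) + φ (Matrix.single 1 1 (1:A))) := by
        rw [← hp]
        calc φ x = φ x * φ 1 := hpr x hx
          _ = (φ 1 * φ x) * φ 1 := by rw [← hpl x hx]
      rw [h1, add_mul, add_mul, mul_add, mul_add,
        hcorner x hx 0 0, hcorner x hx 0 1, hcorner x hx 1 0, hcorner x hx 1 1]
      abel
    -- additivity on corners
    have hTdec : ∀ a : A, φ (1 + Matrix.single 0 1 a)
        = φ 1 + φ (Matrix.single 0 1 a) := by
      intro a
      have h := hdec _ (subset_closure (isUnit_tri01 a))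
      have e00 : ((1 + Matrix.single 0 1 a : Matrix (Fin 2) (Fin 2) A)) 0 0 = 1 := by
        simp [Matrix.one_apply, Matrix.single]
      have e01 : ((1 + Matrix.single 0 1 a : Matrix (Fin 2) (Fin 2) A)) 0 1 = a := by
        simp [Matrix.one_apply, Matrix.single]
      have e10 : ((1 + Matrix.single 0 1 a : Matrix (Fin 2) (Fin 2) A)) 1 0 = 0 := by
        simp [Matrix.one_apply, Matrix.single]
      have e11 : ((1 + Matrix.single 0 1 a : Matrix (Fin 2) (Fin 2) A)) 1 1 = 1 := by
        simp [Matrix.one_apply, Matrix.single]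
      rw [e00, e01, e10, e11, Matrix.single_zero, hz, add_zero] at h
      rw [h, hp]
      abel
    have hSdec : ∀ a : A, φ (1 + Matrix.single 1 0 a)
        = φ 1 + φ (Matrix.single 1 0 a) := by
      intro a
      have h := hdec _ (subset_closure (isUnit_tri10 a))
      have e00 : ((1 + Matrix.single 1 0 a : Matrix (Fin 2) (Fin 2) A)) 0 0 = 1 := by
        simp [Matrix.one_apply, Matrix.single]
      have e01 : ((1 + Matrix.single 1 0 a : Matrix (Fin 2) (Fin 2) A)) 0 1 = 0 := by
        simp [Matrix.one_apply, Matrix.single]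
      have e10 : ((1 + Matrix.single 1 0 a : Matrix (Fin 2) (Fin 2) A)) 1 0 = a := by
        simp [Matrix.one_apply, Matrix.single]
      have e11 : ((1 + Matrix.single 1 0 a : Matrix (Fin 2) (Fin 2) A)) 1 1 = 1 := by
        simp [Matrix.one_apply, Matrix.single]
      rw [e00, e01, e10, e11, Matrix.single_zero, hz, add_zero] at h
      rw [h, hp]
      abel
    have hν01add : ∀ a b : A, φ (Matrix.single 0 1 (a+b))
        = φ (Matrix.single 0 1 a) + φ (Matrix.single 0 1 b) := by
      intro a b
      have hmm : ((1 : Matrix (Fin 2) (Fin 2) A) + Matrix.single 0 1 a)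
          * (1 + Matrix.single 0 1 b) = 1 + Matrix.single 0 1 (a+b) := by
        rw [Matrix.single_add]
        simp [mul_add, add_mul]
        abel
      have h := hm _ (subset_closure (isUnit_tri01 a)) _ (subset_closure (isUnit_tri01 b))
      rw [hmm, hTdec, hTdec, hTdec] at h
      have hprod : (φ 1 + φ (Matrix.single 0 1 a)) * (φ 1 + φ (Matrix.single 0 1 b))
          = φ 1 + (φ (Matrix.single 0 1 a) + φ (Matrix.single 0 1 b)) := by
        have hab : φ (Matrix.single 0 1 a) * φ (Matrix.single 0 1 b) = 0 :=
          hmulE1 0 1 a b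
        rw [add_mul, mul_add, mul_add, h11, hab,
          ← hpl _ (e01a_mem b), ← hpr _ (e01a_mem a), add_zero]
        abel
      rw [hprod] at h
      exact add_left_cancel h
    have hν10add : ∀ a b : A, φ (Matrix.single 1 0 (a+b))
        = φ (Matrix.single 1 0 a) + φ (Matrix.single 1 0 b) := by
      intro a b
      have hmm : ((1 : Matrix (Fin 2) (Fin 2) A) + Matrix.single 1 0 a)
          * (1 + Matrix.single 1 0 b) = 1 + Matrix.single 1 0 (a+b) := by
        rw [Matrix.single_add]
        simp [mul_add, add_mul]
        abel
      have h := hm _ (subset_closure (isUnit_tri10 a)) _ (subset_closure (isUnit_tri10 b))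
      rw [hmm, hSdec, hSdec, hSdec] at h
      have hprod : (φ 1 + φ (Matrix.single 1 0 a)) * (φ 1 + φ (Matrix.single 1 0 b))
          = φ 1 + (φ (Matrix.single 1 0 a) + φ (Matrix.single 1 0 b)) := by
        have hab : φ (Matrix.single 1 0 a) * φ (Matrix.single 1 0 b) = 0 :=
          hmulE0 1 0 a b
        rw [add_mul, mul_add, mul_add, h11, hab,
          ← hpl _ (e10a_mem b), ← hpr _ (e10a_mem a), add_zero]
        abel
      rw [hprod] at h
      exact add_left_cancel h
    have hν00eq : ∀ a : A, φ (Matrix.single 0 0 a)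
        = φ (Matrix.single 0 1 a) * φ (Matrix.single 1 0 (1:A)) := by
      intro a
      rw [hmulE, mul_one]
    have hν11eq : ∀ a : A, φ (Matrix.single 1 1 a)
        = φ (Matrix.single 1 0 a) * φ (Matrix.single 0 1 (1:A)) := by
      intro a
      rw [hmulE, mul_one]
    have hν00add : ∀ a b : A, φ (Matrix.single 0 0 (a+b))
        = φ (Matrix.single 0 0 a) + φ (Matrix.single 0 0 b) := by
      intro a b
      rw [hν00eq, hν00eq, hν00eq, hν01add, add_mul]
    have hν11add : ∀ a b : A, φ (Matrix.single 1 1 (a+b))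
        = φ (Matrix.single 1 1 a) + φ (Matrix.single 1 1 b) := by
      intro a b
      rw [hν11eq, hν11eq, hν11eq, hν10add, add_mul]
    -- the scalar map
    have hfdec : ∀ c : ℂ, φ (c • (1 : Matrix (Fin 2) (Fin 2) A))
        = φ (Matrix.single 0 0 (c • (1:A)))
          + φ (Matrix.single 1 1 (c • (1:A))) := by
      intro c
      have h := hdec _ (smulC_one_mem c)
      have e00 : ((c • (1 : Matrix (Fin 2) (Fin 2) A))) 0 0 = c • (1:A) := by
        simp [Matrix.one_apply]
      have e01 : ((c • (1 : Matrix (Fin 2) (Fin 2) A))) 0 1 = 0 := by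
        simp [Matrix.one_apply]
      have e10 : ((c • (1 : Matrix (Fin 2) (Fin 2) A))) 1 0 = 0 := by
        simp [Matrix.one_apply]
      have e11 : ((c • (1 : Matrix (Fin 2) (Fin 2) A))) 1 1 = c • (1:A) := by
        simp [Matrix.one_apply]
      rw [e00, e01, e10, e11, Matrix.single_zero, Matrix.single_zero, hz] at h
      rw [h]
      abel
    have hfadd : ∀ c d : ℂ, φ ((c + d) • (1 : Matrix (Fin 2) (Fin 2) A))
        = φ (c • (1 : Matrix (Fin 2) (Fin 2) A)) + φ (d • (1 : Matrix (Fin 2) (Fin 2) A)) := by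
      intro c d
      rw [hfdec, hfdec, hfdec, add_smul, hν00add, hν11add]
      abel
    have hFlin : ∀ s : ℝ, φ ((s : ℂ) • (1 : Matrix (Fin 2) (Fin 2) A)) = (s : ℂ) • φ 1 := by
      intro s
      let F : ℝ →+ B := AddMonoidHom.mk'
        (fun s : ℝ => φ ((s : ℂ) • (1 : Matrix (Fin 2) (Fin 2) A)))
        (fun s t => by push_cast; exact hfadd _ _)
      have hFc : Continuous F := hcont
      have h := map_real_smul F hFc s 1
      simp only [smul_eq_mul, mul_one] at h
      have hF1 : F 1 = φ (1 : Matrix (Fin 2) (Fin 2) A) := by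
        show φ (((1:ℝ):ℂ) • (1 : Matrix (Fin 2) (Fin 2) A)) = _
        norm_num
      rw [hF1] at h
      have hsm : (s:ℂ) • φ (1 : Matrix (Fin 2) (Fin 2) A) = s • φ 1 := by
        rw [show ((s:ℝ):ℂ) = s • (1:ℂ) by simp [Complex.real_smul], smul_assoc, one_smul]
      rw [hsm]
      exact h
    have hfmulII : ∀ c d : ℂ, φ ((c*d) • (1 : Matrix (Fin 2) (Fin 2) A))
        = φ (c • (1 : Matrix (Fin 2) (Fin 2) A)) * φ (d • (1 : Matrix (Fin 2) (Fin 2) A)) := by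
      intro c d
      rw [← hm _ (smulC_one_mem c) _ (smulC_one_mem d)]
      congr 1
      rw [smul_mul_assoc, one_mul, smul_smul]
    have hI' : φ (Complex.I • (1 : Matrix (Fin 2) (Fin 2) A)) = Complex.I • φ 1 := by
      rw [hI, hp, smul_add]
    have hf : ∀ c : ℂ, φ (c • (1 : Matrix (Fin 2) (Fin 2) A)) = c • φ 1 := by
      intro c
      have hdecc : ((c.re:ℝ):ℂ) + ((c.im:ℝ):ℂ) * Complex.I = c := Complex.re_add_im c
      calc φ (c • (1 : Matrix (Fin 2) (Fin 2) A))
          = φ ((((c.re:ℝ):ℂ) + ((c.im:ℝ):ℂ) * Complex.I) • 1) := by rw [hdecc]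
        _ = φ (((c.re:ℝ):ℂ) • 1) + φ ((((c.im:ℝ):ℂ) * Complex.I) • 1) := hfadd _ _
        _ = φ (((c.re:ℝ):ℂ) • 1) + φ (((c.im:ℝ):ℂ) • 1) * φ (Complex.I • 1) := by
            rw [hfmulII]
        _ = ((c.re:ℝ):ℂ) • φ 1 + (((c.im:ℝ):ℂ) • φ 1) * (Complex.I • φ 1) := by
            rw [hFlin, hFlin, hI']
        _ = ((c.re:ℝ):ℂ) • φ 1 + (((c.im:ℝ):ℂ) * Complex.I) • φ 1 := by
            rw [smul_mul_assoc, mul_smul_comm, smul_smul, h11]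
        _ = c • φ 1 := by rw [← add_smul, hdecc]
    have hνsmul : ∀ (i j : Fin 2) (c : ℂ) (a : A),
        φ (Matrix.single i j (c • a)) = c • φ (Matrix.single i j a) := by
      intro i j c a
      have hmat : (c • (1 : Matrix (Fin 2) (Fin 2) A)) * Matrix.single i j a
          = Matrix.single i j (c • a) := by
        rw [smul_mul_assoc, one_mul, Matrix.smul_single]
      rw [← hmat, hm _ (smulC_one_mem c) _ (e_mem i j a), hf, smul_mul_assoc,
        ← hpl _ (e_mem i j a)]
    -- construct ψ
    refine ⟨fun x => φ (Matrix.single 0 0 (x 0 0)) + φ (Matrix.single 0 1 (x 0 1))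
      + φ (Matrix.single 1 0 (x 1 0)) + φ (Matrix.single 1 1 (x 1 1)),
      fun x y => ?_, fun c x => ?_, fun x y => ?_, fun x hx => (hdec x hx).symm⟩
    · simp only [Matrix.add_apply, hν00add, hν01add, hν10add, hν11add]
      abel
    · simp only [Matrix.smul_apply, hνsmul, smul_add]
    · have hxy : ∀ i l : Fin 2, (x*y) i l = x i 0 * y 0 l + x i 1 * y 1 l := by
        intro i l
        rw [Matrix.mul_apply, Fin.sum_univ_two]
      simp only [hxy, hν00add, hν01add, hν10add, hν11add]
      simp only [add_mul, mul_add, hmulE, hmulE0, hmulE1, add_zero, zero_add]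
      abel
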